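/- arXiv:2106.14648 — 5 statements merged into one kernel-verified Lean document; each statement's English description precedes it below -/
import Mathlib

section
/- Let E be a real inner product space, σ > 0, ι a finite nonempty index set, data points x_i ∈ E and values a_i ∈ ℝ for i ∈ ι. Define w_i(x) = exp(−‖x − x_i‖²/σ²) and the smoothed estimator f(x) = (∑_i w_i(x) a_i)/(∑_i w_i(x)), whose denominator is strictly positive for every x. Then f is differentiable at every x ∈ E and its derivative satisfies the operator-norm bound ‖Df(x)‖ ≤ (2/σ²) · (max_{i∈ι} ‖x − x_i‖) · (max_{i∈ι} a_i − min_{i∈ι} a_i). -/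
set_option maxHeartbeats 1000000

private theorem gauss_deriv' {E : Type*} [NormedAddCommGroup E] [InnerProductSpace ℝ E]
    (σ : ℝ) (z : E) (x : E) :
    HasFDerivAt (fun y : E => Real.exp (-‖y - z‖ ^ 2 * (σ ^ 2)⁻¹))
      ((Real.exp (-‖x - z‖ ^ 2 * (σ ^ 2)⁻¹) * (-2 * (σ ^ 2)⁻¹)) • innerSL ℝ (x - z)) x := by
  have h1 : HasFDerivAt (fun y : E => y - z) (ContinuousLinearMap.id ℝ E) x := by
    simpa using (hasFDerivAt_id x).sub_const z
  have h4 := ((h1.norm_sq.neg).mul_const ((σ ^ 2)⁻¹)).exp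
  convert h4 using 1
  · rfl
  ext v
  simp [ContinuousLinearMap.smul_apply, smul_eq_mul, real_inner_comm, Pi.neg_apply]
  ring

/-- The Gaussian-kernel smoothed (Nadaraya–Watson) estimator
`f x = (∑ i, exp (−‖x − xi i‖²/σ²) * a i) / (∑ i, exp (−‖x − xi i‖²/σ²))`
has a strictly positive denominator everywhere, is differentiable everywhere, and its
derivative satisfies the operator-norm bound
`‖Df x‖ ≤ (2/σ²) · max_i ‖x − xi i‖ · (max_i a i − min_i a i)`. -/
theorem smoothed_estimator_differentiable_and_deriv_bound
    {E : Type*} [NormedAddCommGroup E] [InnerProductSpace ℝ E]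
    {ι : Type*} [Fintype ι] [Nonempty ι]
    (σ : ℝ) (hσ : 0 < σ) (xi : ι → E) (a : ι → ℝ) (x : E) :
    (∀ y : E, 0 < ∑ i, Real.exp (-‖y - xi i‖ ^ 2 / σ ^ 2)) ∧
    DifferentiableAt ℝ
      (fun y : E => (∑ i, Real.exp (-‖y - xi i‖ ^ 2 / σ ^ 2) * a i) /
        (∑ i, Real.exp (-‖y - xi i‖ ^ 2 / σ ^ 2))) x ∧
    ‖fderiv ℝ
        (fun y : E => (∑ i, Real.exp (-‖y - xi i‖ ^ 2 / σ ^ 2) * a i) /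
          (∑ i, Real.exp (-‖y - xi i‖ ^ 2 / σ ^ 2))) x‖
      ≤ 2 / σ ^ 2 * (Finset.univ.sup' Finset.univ_nonempty fun i => ‖x - xi i‖) *
        ((Finset.univ.sup' Finset.univ_nonempty a) -
          (Finset.univ.inf' Finset.univ_nonempty a)) := by
  have hσ2 : (0 : ℝ) < σ ^ 2 := by positivity
  have hpos : ∀ y : E, 0 < ∑ i, Real.exp (-‖y - xi i‖ ^ 2 / σ ^ 2) := fun y =>
    Finset.sum_pos (fun i _ => Real.exp_pos _) Finset.univ_nonempty
  -- abbreviations (values at x, in `mul_inv` form)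
  have hDpos : 0 < ∑ i, Real.exp (-‖x - xi i‖ ^ 2 * (σ ^ 2)⁻¹) := by
    simpa [div_eq_mul_inv] using hpos x
  have hW : ∀ i : ι, HasFDerivAt (fun y : E => Real.exp (-‖y - xi i‖ ^ 2 * (σ ^ 2)⁻¹))
      ((Real.exp (-‖x - xi i‖ ^ 2 * (σ ^ 2)⁻¹) * (-2 * (σ ^ 2)⁻¹)) • innerSL ℝ (x - xi i)) x :=
    fun i => gauss_deriv' σ (xi i) x
  have hD : HasFDerivAt (fun y : E => ∑ i, Real.exp (-‖y - xi i‖ ^ 2 * (σ ^ 2)⁻¹))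
      (∑ i, (Real.exp (-‖x - xi i‖ ^ 2 * (σ ^ 2)⁻¹) * (-2 * (σ ^ 2)⁻¹)) • innerSL ℝ (x - xi i))
      x := HasFDerivAt.fun_sum fun i _ => hW i
  have hN : HasFDerivAt (fun y : E => ∑ i, Real.exp (-‖y - xi i‖ ^ 2 * (σ ^ 2)⁻¹) * a i)
      (∑ i, a i • ((Real.exp (-‖x - xi i‖ ^ 2 * (σ ^ 2)⁻¹) * (-2 * (σ ^ 2)⁻¹)) •
        innerSL ℝ (x - xi i))) x := HasFDerivAt.fun_sum fun i _ => (hW i).mul_const (a i)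
  have hDinv : HasFDerivAt (fun y : E => (∑ i, Real.exp (-‖y - xi i‖ ^ 2 * (σ ^ 2)⁻¹))⁻¹)
      ((-((∑ i, Real.exp (-‖x - xi i‖ ^ 2 * (σ ^ 2)⁻¹)) ^ 2)⁻¹) •
        (∑ i, (Real.exp (-‖x - xi i‖ ^ 2 * (σ ^ 2)⁻¹) * (-2 * (σ ^ 2)⁻¹)) •
          innerSL ℝ (x - xi i))) x :=
    (hasDerivAt_inv hDpos.ne').comp_hasFDerivAt x hD
  have hf0 : HasFDerivAt
      (fun y : E => (∑ i, Real.exp (-‖y - xi i‖ ^ 2 * (σ ^ 2)⁻¹) * a i) *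
        (∑ i, Real.exp (-‖y - xi i‖ ^ 2 * (σ ^ 2)⁻¹))⁻¹)
      ((∑ i, Real.exp (-‖x - xi i‖ ^ 2 * (σ ^ 2)⁻¹) * a i) •
        ((-((∑ i, Real.exp (-‖x - xi i‖ ^ 2 * (σ ^ 2)⁻¹)) ^ 2)⁻¹) •
          (∑ i, (Real.exp (-‖x - xi i‖ ^ 2 * (σ ^ 2)⁻¹) * (-2 * (σ ^ 2)⁻¹)) •
            innerSL ℝ (x - xi i))) +
        (∑ i, Real.exp (-‖x - xi i‖ ^ 2 * (σ ^ 2)⁻¹))⁻¹ •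
          (∑ i, a i • ((Real.exp (-‖x - xi i‖ ^ 2 * (σ ^ 2)⁻¹) * (-2 * (σ ^ 2)⁻¹)) •
            innerSL ℝ (x - xi i)))) x := hN.mul hDinv
  refine ⟨hpos, ?_, ?_⟩
  · simp only [div_eq_mul_inv]
    exact hf0.differentiableAt
  · simp only [div_eq_mul_inv]
    rw [hf0.fderiv]
    -- notation
    set M : ℝ := Finset.univ.sup' Finset.univ_nonempty fun i => ‖x - xi i‖ with hM
    set S : ℝ := Finset.univ.sup' Finset.univ_nonempty a with hS
    set I : ℝ := Finset.univ.inf' Finset.univ_nonempty a with hI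
    set w : ι → ℝ := fun i => Real.exp (-‖x - xi i‖ ^ 2 * (σ ^ 2)⁻¹) with hw
    set Dx : ℝ := ∑ i, w i with hDx
    set Nx : ℝ := ∑ i, w i * a i with hNx
    obtain ⟨j⟩ := ‹Nonempty ι›
    have hwpos : ∀ i : ι, 0 < w i := fun i => by rw [hw]; exact Real.exp_pos _
    have hM0 : 0 ≤ M := by
      refine le_trans (norm_nonneg (x - xi j)) ?_
      rw [hM]; exact Finset.le_sup' (fun i => ‖x - xi i‖) (Finset.mem_univ j)
    have hR0 : 0 ≤ S - I := by
      rw [hS, hI]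
      exact sub_nonneg.2 <|
        le_trans (Finset.inf'_le a (Finset.mem_univ j)) (Finset.le_sup' a (Finset.mem_univ j))
    apply ContinuousLinearMap.opNorm_le_bound _ (mul_nonneg (mul_nonneg (by positivity) hM0) hR0)
    intro v
    have hDaN : ∀ i : ι, |Dx * a i - Nx| ≤ Dx * (S - I) := by
      intro i
      have h1 : Dx * a i - Nx = ∑ k, w k * (a i - a k) := by
        rw [hDx, hNx, Finset.sum_mul, ← Finset.sum_sub_distrib]
        exact Finset.sum_congr rfl fun k _ => by ring
      rw [h1, hDx, Finset.sum_mul]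
      refine (Finset.abs_sum_le_sum_abs _ _).trans (Finset.sum_le_sum fun k _ => ?_)
      rw [abs_mul, abs_of_pos (hwpos k)]
      refine mul_le_mul_of_nonneg_left ?_ (hwpos k).le
      rw [hS, hI]
      refine abs_le.2 ⟨?_, ?_⟩
      · rw [neg_sub]
        exact sub_le_sub (Finset.inf'_le a (Finset.mem_univ i)) (Finset.le_sup' a (Finset.mem_univ k))
      · exact sub_le_sub (Finset.le_sup' a (Finset.mem_univ i)) (Finset.inf'_le a (Finset.mem_univ k))
    have hinner : ∀ i : ι, |(inner ℝ (x - xi i) v : ℝ)| ≤ M * ‖v‖ := by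
      intro i
      refine (abs_real_inner_le_norm _ _).trans
        (mul_le_mul_of_nonneg_right ?_ (norm_nonneg v))
      rw [hM]; exact Finset.le_sup' (fun i => ‖x - xi i‖) (Finset.mem_univ i)
    -- value of the derivative at v
    have happ : (Nx • ((-(Dx ^ 2)⁻¹) • (∑ i, (w i * (-2 * (σ ^ 2)⁻¹)) • innerSL ℝ (x - xi i))) +
        Dx⁻¹ • (∑ i, a i • ((w i * (-2 * (σ ^ 2)⁻¹)) • innerSL ℝ (x - xi i)))) v =
        (Dx ^ 2)⁻¹ * ∑ i, w i * (-2 * (σ ^ 2)⁻¹) * (inner ℝ (x - xi i) v : ℝ) *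
          (Dx * a i - Nx) := by
      have hsum : ∑ i, w i * (-2 * (σ ^ 2)⁻¹) * (inner ℝ (x - xi i) v : ℝ) * (Dx * a i - Nx) =
          Dx * (∑ i, a i * (w i * (-2 * (σ ^ 2)⁻¹) * (inner ℝ (x - xi i) v : ℝ))) -
          Nx * (∑ i, w i * (-2 * (σ ^ 2)⁻¹) * (inner ℝ (x - xi i) v : ℝ)) := by
        rw [Finset.mul_sum, Finset.mul_sum, ← Finset.sum_sub_distrib]
        exact Finset.sum_congr rfl fun i _ => by ring
      simp only [ContinuousLinearMap.add_apply, ContinuousLinearMap.smul_apply,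
        ContinuousLinearMap.sum_apply, innerSL_apply_apply, smul_eq_mul]
      rw [hsum]
      have hDne : Dx ≠ 0 := hDpos.ne'
      generalize (∑ i, w i * (-2 * (σ ^ 2)⁻¹) * inner ℝ (x - xi i) v) = B
      generalize (∑ i, a i * (w i * (-2 * (σ ^ 2)⁻¹) * inner ℝ (x - xi i) v)) = A
      field_simp
      ring
    rw [happ, Real.norm_eq_abs, abs_mul, abs_of_pos (inv_pos.2 (pow_pos hDpos 2))]
    calc (Dx ^ 2)⁻¹ * |∑ i, w i * (-2 * (σ ^ 2)⁻¹) * (inner ℝ (x - xi i) v : ℝ) * (Dx * a i - Nx)|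
        ≤ (Dx ^ 2)⁻¹ * ∑ i, w i * (2 * (σ ^ 2)⁻¹ * (M * ‖v‖) * (Dx * (S - I))) := by
          refine mul_le_mul_of_nonneg_left ((Finset.abs_sum_le_sum_abs _ _).trans
            (Finset.sum_le_sum fun i _ => ?_)) (inv_pos.2 (pow_pos hDpos 2)).le
          have habs : |w i * (-2 * (σ ^ 2)⁻¹) * (inner ℝ (x - xi i) v : ℝ) * (Dx * a i - Nx)| =
              w i * (2 * (σ ^ 2)⁻¹) * |(inner ℝ (x - xi i) v : ℝ)| * |Dx * a i - Nx| := by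
            rw [abs_mul, abs_mul, abs_mul, abs_of_pos (hwpos i),
              abs_of_neg (by simp; positivity : (-2 * (σ ^ 2)⁻¹ : ℝ) < 0)]
            ring
          rw [habs]
          have h1 := hinner i
          have h2 := hDaN i
          have h3 : (0:ℝ) ≤ w i * (2 * (σ ^ 2)⁻¹) := mul_nonneg (hwpos i).le (by positivity)
          calc w i * (2 * (σ ^ 2)⁻¹) * |(inner ℝ (x - xi i) v : ℝ)| * |Dx * a i - Nx|
              ≤ w i * (2 * (σ ^ 2)⁻¹) * (M * ‖v‖) * (Dx * (S - I)) := by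
                exact mul_le_mul (mul_le_mul_of_nonneg_left h1 h3) h2 (abs_nonneg _)
                  (mul_nonneg h3 (mul_nonneg hM0 (norm_nonneg v)))
            _ = w i * (2 * (σ ^ 2)⁻¹ * (M * ‖v‖) * (Dx * (S - I))) := by ring
      _ = 2 * (σ ^ 2)⁻¹ * M * (S - I) * ‖v‖ := by
          rw [← Finset.sum_mul, ← hDx]
          have hDne : Dx ≠ 0 := hDpos.ne'
          field_simp
end

section
/- (Theorem: Lipschitz continuity of Smoothed SHAP.) Let E be a real inner product space, σ > 0, ι a finite nonempty index set, data points x_i ∈ E and values a_i ∈ ℝ for i ∈ ι. Define w_i(x) = exp(−‖x − x_i‖²/σ²) and f(x) = (∑_i w_i(x) a_i)/(∑_i w_i(x)). Then for every centre c ∈ E and radius R > 0, f is Lipschitz on the closed ball of radius R around c with Lipschitz constant L = (2/σ²) · (R + max_{i∈ι} ‖c − x_i‖) · (max_{i∈ι} a_i − min_{i∈ι} a_i). In particular, for every x₀ ∈ E and δ > 0 there exists a finite constant L such that |f(x) − f(x₀)| ≤ L‖x − x₀‖ for all x with ‖x − x₀‖ < δ. -/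
open Finset Metric Real

section Aux

variable {E : Type*} [NormedAddCommGroup E] [InnerProductSpace ℝ E]
  {ι : Type*} [Fintype ι] [Nonempty ι]

set_option maxHeartbeats 1600000 in
theorem smoothed_shap_lip_ball (σ : ℝ) (hσ : 0 < σ) (xi : ι → E) (a : ι → ℝ)
    (c : E) (R : ℝ) (hR : 0 < R) :
    LipschitzOnWith
      (Real.toNNReal (2 / σ ^ 2 *
        (R + Finset.univ.sup' Finset.univ_nonempty fun i => ‖c - xi i‖) *
        ((Finset.univ.sup' Finset.univ_nonempty a) -
          (Finset.univ.inf' Finset.univ_nonempty a))))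
      (fun x : E => (∑ i, Real.exp (-‖x - xi i‖ ^ 2 / σ ^ 2) * a i) /
        (∑ i, Real.exp (-‖x - xi i‖ ^ 2 / σ ^ 2)))
      (Metric.closedBall c R) := by
  have hσ2 : (0:ℝ) < σ ^ 2 := by positivity
  set M : ℝ := Finset.univ.sup' Finset.univ_nonempty fun i => ‖c - xi i‖ with hM
  set amax : ℝ := Finset.univ.sup' Finset.univ_nonempty a with hamax
  set amin : ℝ := Finset.univ.inf' Finset.univ_nonempty a with hamin
  set g : E → ι → ℝ := fun x i => Real.exp (-‖x - xi i‖ ^ 2 / σ ^ 2) with hgdef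
  set W : E → ℝ := fun x => ∑ i, g x i with hWdef
  set S : E → ℝ := fun x => ∑ i, g x i * a i with hSdef
  set L : ℝ := 2 / σ ^ 2 * (R + M) * (amax - amin) with hLdef
  have hWpos : ∀ x, 0 < W x := fun x =>
    Finset.sum_pos (fun i _ => Real.exp_pos _) Finset.univ_nonempty
  obtain ⟨i₀⟩ : Nonempty ι := inferInstance
  have hM0 : 0 ≤ M := le_trans (norm_nonneg (c - xi i₀))
    (Finset.le_sup' (fun i => ‖c - xi i‖) (Finset.mem_univ i₀))
  have hrange : amin ≤ amax :=
    le_trans (Finset.inf'_le a (Finset.mem_univ i₀)) (Finset.le_sup' a (Finset.mem_univ i₀))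
  have hL0 : 0 ≤ L := by
    have : (0:ℝ) ≤ 2 / σ ^ 2 := by positivity
    have h1 : (0:ℝ) ≤ R + M := by linarith
    have h2 : (0:ℝ) ≤ amax - amin := by linarith
    positivity
  -- bounds on f
  have hfub : ∀ x, S x / W x ≤ amax := by
    intro x
    rw [div_le_iff₀ (hWpos x)]
    calc S x ≤ ∑ i, g x i * amax :=
          Finset.sum_le_sum fun i _ => mul_le_mul_of_nonneg_left
            (Finset.le_sup' a (Finset.mem_univ i)) (Real.exp_pos _).le
      _ = amax * W x := by
          show ∑ i, g x i * amax = amax * ∑ i, g x i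
          rw [Finset.mul_sum]
          exact Finset.sum_congr rfl fun i _ => mul_comm _ _
  have hflb : ∀ x, amin ≤ S x / W x := by
    intro x
    rw [le_div_iff₀ (hWpos x)]
    calc amin * W x = ∑ i, g x i * amin := by
          show amin * ∑ i, g x i = ∑ i, g x i * amin
          rw [Finset.mul_sum]
          exact Finset.sum_congr rfl fun i _ => mul_comm _ _
      _ ≤ S x := Finset.sum_le_sum fun i _ => mul_le_mul_of_nonneg_left
            (Finset.inf'_le a (Finset.mem_univ i)) (Real.exp_pos _).le
  have key : ∀ x : E, ∃ D : E →L[ℝ] ℝ,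
      HasFDerivAt (fun y => S y / W y) D x ∧ (x ∈ Metric.closedBall c R → ‖D‖ ≤ L) := by
    intro x
    set G : ι → (E →L[ℝ] ℝ) := fun i =>
      g x i • ((-(σ ^ 2)⁻¹ : ℝ) •
        (2 • (innerSL ℝ (x - xi i)).comp (ContinuousLinearMap.id ℝ E))) with hGdef
    have hgd : ∀ i, HasFDerivAt (fun y => g y i) (G i) x := by
      intro i
      have h1 : HasFDerivAt (fun y : E => y - xi i) (ContinuousLinearMap.id ℝ E) x :=
        (hasFDerivAt_id x).sub_const _
      have h2 := h1.norm_sq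
      have h3 := h2.const_mul (-(σ ^ 2)⁻¹ : ℝ)
      have heq : (fun y : E => -‖y - xi i‖ ^ 2 / σ ^ 2)
          = fun y : E => (-(σ ^ 2)⁻¹ : ℝ) * ‖y - xi i‖ ^ 2 := by
        funext y; field_simp
      have h4 : HasFDerivAt (fun y : E => -‖y - xi i‖ ^ 2 / σ ^ 2)
          ((-(σ ^ 2)⁻¹ : ℝ) • (2 • (innerSL ℝ (x - xi i)).comp (ContinuousLinearMap.id ℝ E))) x := by
        rw [heq]; exact h3
      convert h4.exp using 1
    have hS' : HasFDerivAt S (∑ i, a i • G i) x :=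
      HasFDerivAt.fun_sum fun i _ => (hgd i).mul_const (a i)
    have hW' : HasFDerivAt W (∑ i, G i) x :=
      HasFDerivAt.fun_sum fun i _ => hgd i
    have hWinv : HasFDerivAt (fun y => (W y)⁻¹)
        ((-(W x ^ 2)⁻¹ : ℝ) • (∑ i, G i)) x :=
      (hasDerivAt_inv (ne_of_gt (hWpos x))).comp_hasFDerivAt x hW'
    set D : E →L[ℝ] ℝ :=
      S x • ((-(W x ^ 2)⁻¹ : ℝ) • (∑ i, G i)) + (W x)⁻¹ • (∑ i, a i • G i) with hDdef
    refine ⟨D, ?_, ?_⟩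
    · have := hS'.mul hWinv
      have heq : (fun y => S y / W y) = fun y => S y * (W y)⁻¹ := by
        funext y; rw [div_eq_mul_inv]
      rw [heq]; exact this
    · intro hx
      refine ContinuousLinearMap.opNorm_le_bound _ hL0 fun v => ?_
      have hGv : ∀ i, G i v = g x i * (-(σ ^ 2)⁻¹ * (2 * inner ℝ (x - xi i) v)) := by
        intro i
        simp [hGdef, ContinuousLinearMap.smul_apply, smul_eq_mul, inner_sub_left]
      have hDv : D v = ∑ i, ((a i - S x / W x) / W x) * G i v := by
        simp only [hDdef, ContinuousLinearMap.add_apply, ContinuousLinearMap.smul_apply,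
          ContinuousLinearMap.sum_apply, smul_eq_mul]
        rw [Finset.mul_sum, Finset.mul_sum, Finset.mul_sum, ← Finset.sum_add_distrib]
        refine Finset.sum_congr rfl fun i _ => ?_
        have hW0 := (hWpos x).ne'
        field_simp
        ring
      have hxxi : ∀ i, ‖x - xi i‖ ≤ R + M := by
        intro i
        have h1 : ‖x - c‖ ≤ R := by
          rw [← dist_eq_norm]; exact Metric.mem_closedBall.mp hx
        have h2 : ‖c - xi i‖ ≤ M := Finset.le_sup' (fun i => ‖c - xi i‖) (Finset.mem_univ i)
        calc ‖x - xi i‖ = ‖(x - c) + (c - xi i)‖ := by rw [sub_add_sub_cancel]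
          _ ≤ ‖x - c‖ + ‖c - xi i‖ := norm_add_le _ _
          _ ≤ R + M := add_le_add h1 h2
      have hfab : ∀ i, |a i - S x / W x| ≤ amax - amin := by
        intro i
        rw [abs_sub_le_iff]
        constructor
        · have := Finset.le_sup' a (Finset.mem_univ i); have := hflb x; linarith
        · have := Finset.inf'_le a (Finset.mem_univ i); have := hfub x; linarith
      have hterm : ∀ i, |((a i - S x / W x) / W x) * G i v|
          ≤ (W x)⁻¹ * g x i * ((amax - amin) * (2 / σ ^ 2 * ((R + M) * ‖v‖))) := by
        intro i
        rw [hGv i, abs_mul, abs_div, abs_of_pos (hWpos x), abs_mul]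
        have h1 : |(-(σ ^ 2)⁻¹ * (2 * inner ℝ (x - xi i) v) : ℝ)|
            ≤ (σ ^ 2)⁻¹ * (2 * ((R + M) * ‖v‖)) := by
          rw [abs_mul, abs_neg, abs_of_pos (inv_pos.mpr hσ2), abs_mul]
          have hcs : |(inner ℝ (x - xi i) v : ℝ)| ≤ (R + M) * ‖v‖ := by
            calc |(inner ℝ (x - xi i) v : ℝ)| ≤ ‖x - xi i‖ * ‖v‖ := abs_real_inner_le_norm _ _
              _ ≤ (R + M) * ‖v‖ := mul_le_mul_of_nonneg_right (hxxi i) (norm_nonneg v)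
          have : |(2:ℝ)| = 2 := by norm_num
          rw [this]
          exact mul_le_mul_of_nonneg_left
            (mul_le_mul_of_nonneg_left hcs (by norm_num)) (inv_pos.mpr hσ2).le
        have habsg : |g x i| = g x i := abs_of_pos (Real.exp_pos _)
        rw [habsg]
        calc |a i - S x / W x| / W x * (g x i * |(-(σ ^ 2)⁻¹ * (2 * inner ℝ (x - xi i) v) : ℝ)|)
            ≤ (amax - amin) / W x * (g x i * ((σ ^ 2)⁻¹ * (2 * ((R + M) * ‖v‖)))) := by
              apply mul_le_mul
              · gcongr
                exact hfab i
              · exact mul_le_mul_of_nonneg_left h1 (Real.exp_pos _).le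
              · positivity
              · have h2 : (0:ℝ) ≤ amax - amin := by linarith
                positivity
          _ = (W x)⁻¹ * g x i * ((amax - amin) * (2 / σ ^ 2 * ((R + M) * ‖v‖))) := by
              field_simp
      calc |D v| ≤ ∑ i, |((a i - S x / W x) / W x) * G i v| := by
            rw [hDv]; exact Finset.abs_sum_le_sum_abs _ _
        _ ≤ ∑ i, (W x)⁻¹ * g x i * ((amax - amin) * (2 / σ ^ 2 * ((R + M) * ‖v‖))) :=
            Finset.sum_le_sum fun i _ => hterm i
        _ = (W x)⁻¹ * W x * ((amax - amin) * (2 / σ ^ 2 * ((R + M) * ‖v‖))) := by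
            rw [← Finset.sum_mul, ← Finset.mul_sum]
        _ = L * ‖v‖ := by
            rw [inv_mul_cancel₀ (hWpos x).ne', one_mul, hLdef]; ring
  choose D hD hDle using key
  have : LipschitzOnWith (Real.toNNReal L)
      (fun x : E => S x / W x) (Metric.closedBall c R) := by
    apply (convex_closedBall c R).lipschitzOnWith_of_nnnorm_hasFDerivWithin_le
      (f' := D) (fun x hx => (hD x).hasFDerivWithinAt) (fun x hx => ?_)
    have h1 : ‖D x‖ ≤ L := hDle x hx
    rw [← norm_toNNReal]
    exact Real.toNNReal_mono h1
  exact this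

end Aux

/-- **Lipschitz continuity of Smoothed SHAP.** The Gaussian-kernel smoothed estimator
`f x = (∑ i, exp (−‖x − xi i‖²/σ²) * a i) / (∑ i, exp (−‖x − xi i‖²/σ²))` is Lipschitz on
every closed ball `closedBall c R` with constant
`L = (2/σ²) · (R + max_i ‖c − xi i‖) · (max_i a i − min_i a i)`; in particular, for every
`x₀` and `δ > 0` there is a constant `L ≥ 0` with `|f x − f x₀| ≤ L‖x − x₀‖` whenever
`‖x − x₀‖ < δ`. -/
theorem smoothed_shap_locally_lipschitz
    {E : Type*} [NormedAddCommGroup E] [InnerProductSpace ℝ E]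
    {ι : Type*} [Fintype ι] [Nonempty ι]
    (σ : ℝ) (hσ : 0 < σ) (xi : ι → E) (a : ι → ℝ) :
    (∀ (c : E) (R : ℝ), 0 < R →
      LipschitzOnWith
        (Real.toNNReal (2 / σ ^ 2 *
          (R + Finset.univ.sup' Finset.univ_nonempty fun i => ‖c - xi i‖) *
          ((Finset.univ.sup' Finset.univ_nonempty a) -
            (Finset.univ.inf' Finset.univ_nonempty a))))
        (fun x : E => (∑ i, Real.exp (-‖x - xi i‖ ^ 2 / σ ^ 2) * a i) /
          (∑ i, Real.exp (-‖x - xi i‖ ^ 2 / σ ^ 2)))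
        (Metric.closedBall c R)) ∧
    (∀ (x₀ : E) (δ : ℝ), 0 < δ → ∃ L : ℝ, 0 ≤ L ∧
      ∀ x : E, ‖x - x₀‖ < δ →
        |(∑ i, Real.exp (-‖x - xi i‖ ^ 2 / σ ^ 2) * a i) /
            (∑ i, Real.exp (-‖x - xi i‖ ^ 2 / σ ^ 2)) -
          (∑ i, Real.exp (-‖x₀ - xi i‖ ^ 2 / σ ^ 2) * a i) /
            (∑ i, Real.exp (-‖x₀ - xi i‖ ^ 2 / σ ^ 2))| ≤ L * ‖x - x₀‖) := by
  refine ⟨fun c R hR => smoothed_shap_lip_ball σ hσ xi a c R hR, ?_⟩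
  intro x₀ δ hδ
  have hlip := smoothed_shap_lip_ball σ hσ xi a x₀ δ hδ
  set K := Real.toNNReal (2 / σ ^ 2 *
    (δ + Finset.univ.sup' Finset.univ_nonempty fun i => ‖x₀ - xi i‖) *
    ((Finset.univ.sup' Finset.univ_nonempty a) -
      (Finset.univ.inf' Finset.univ_nonempty a))) with hK
  refine ⟨(K : ℝ), K.coe_nonneg, fun x hx => ?_⟩
  have hx₀mem : x₀ ∈ Metric.closedBall x₀ δ := Metric.mem_closedBall_self hδ.le
  have hxmem : x ∈ Metric.closedBall x₀ δ := by
    rw [Metric.mem_closedBall, dist_eq_norm]; exact hx.le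
  have := hlip.dist_le_mul x hxmem x₀ hx₀mem
  rwa [Real.dist_eq, dist_eq_norm] at this
end

section
/- Let μ be a probability measure on a real inner product space E (equipped with its Borel σ-algebra), let x ∈ E, and let f : E → ℝ be μ-integrable. Then as σ → ∞, the kernel-weighted expectation (∫ exp(−‖z − x‖²/σ²) f(z) dμ(z)) / (∫ exp(−‖z − x‖²/σ²) dμ(z)) converges to ∫ f dμ. -/
open MeasureTheory Filter

/-- As the bandwidth `σ → ∞`, the Gaussian-kernel-weighted expectation
`(∫ exp (−‖z − x‖²/σ²) f z ∂μ) / (∫ exp (−‖z − x‖²/σ²) ∂μ)` of a μ-integrable function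
`f` under a probability measure `μ` converges to the global expectation `∫ f ∂μ`. -/
theorem kernel_weighted_expectation_tendsto_global
    {E : Type*} [NormedAddCommGroup E] [InnerProductSpace ℝ E]
    [MeasurableSpace E] [BorelSpace E]
    (μ : Measure E) [IsProbabilityMeasure μ]
    (x : E) (f : E → ℝ) (hf : Integrable f μ) :
    Tendsto
      (fun σ : ℝ =>
        (∫ z, Real.exp (-‖z - x‖ ^ 2 / σ ^ 2) * f z ∂μ) /
          (∫ z, Real.exp (-‖z - x‖ ^ 2 / σ ^ 2) ∂μ))
      atTop (nhds (∫ z, f z ∂μ)) := by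
  have hexp_le : ∀ (σ : ℝ) (z : E), Real.exp (-‖z - x‖ ^ 2 / σ ^ 2) ≤ 1 := by
    intro σ z
    rw [Real.exp_le_one_iff]
    apply div_nonpos_of_nonpos_of_nonneg
    · simp
    · positivity
  have hexp_pos : ∀ (σ : ℝ) (z : E), 0 < Real.exp (-‖z - x‖ ^ 2 / σ ^ 2) :=
    fun σ z => Real.exp_pos _
  have hlim : ∀ z : E, Tendsto (fun σ : ℝ => Real.exp (-‖z - x‖ ^ 2 / σ ^ 2)) atTop
      (nhds 1) := by
    intro z
    have h1 : Tendsto (fun σ : ℝ => -‖z - x‖ ^ 2 / σ ^ 2) atTop (nhds 0) :=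
      Tendsto.div_atTop tendsto_const_nhds (tendsto_pow_atTop two_ne_zero)
    simpa [Function.comp_def] using (Real.continuous_exp.continuousAt.tendsto.comp h1)
  have hmeas : ∀ σ : ℝ, AEStronglyMeasurable
      (fun z : E => Real.exp (-‖z - x‖ ^ 2 / σ ^ 2)) μ := by
    intro σ
    have hc : Continuous fun z : E => Real.exp (-‖z - x‖ ^ 2 / σ ^ 2) := by
      fun_prop
    exact hc.aestronglyMeasurable
  have hnum : Tendsto (fun σ : ℝ => ∫ z, Real.exp (-‖z - x‖ ^ 2 / σ ^ 2) * f z ∂μ)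
      atTop (nhds (∫ z, f z ∂μ)) := by
    apply tendsto_integral_filter_of_dominated_convergence (fun z => |f z|)
    · filter_upwards with σ
      exact (hmeas σ).mul hf.aestronglyMeasurable
    · filter_upwards with σ
      filter_upwards with z
      rw [Real.norm_eq_abs, abs_mul, Real.abs_exp]
      calc Real.exp (-‖z - x‖ ^ 2 / σ ^ 2) * |f z| ≤ 1 * |f z| :=
            mul_le_mul_of_nonneg_right (hexp_le σ z) (abs_nonneg _)
        _ = |f z| := one_mul _
    · exact hf.abs
    · filter_upwards with z
      simpa using (hlim z).mul tendsto_const_nhds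
  have hden : Tendsto (fun σ : ℝ => ∫ z, Real.exp (-‖z - x‖ ^ 2 / σ ^ 2) ∂μ)
      atTop (nhds 1) := by
    have : Tendsto (fun σ : ℝ => ∫ z, Real.exp (-‖z - x‖ ^ 2 / σ ^ 2) ∂μ)
        atTop (nhds (∫ _z, (1 : ℝ) ∂μ)) := by
      apply tendsto_integral_filter_of_dominated_convergence (fun _ => (1 : ℝ))
      · filter_upwards with σ; exact hmeas σ
      · filter_upwards with σ
        filter_upwards with z
        rw [Real.norm_eq_abs, Real.abs_exp]
        exact hexp_le σ z
      · exact integrable_const 1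
      · filter_upwards with z; exact hlim z
    simpa using this
  have := hnum.div hden one_ne_zero
  simpa [Pi.div_def] using this
end

section
/- Let E be a real inner product space, x ∈ E, ι a finite index set, x_i ∈ E and a_i ∈ ℝ for i ∈ ι, and suppose there is an index j ∈ ι that is the strictly unique nearest point to x: ‖x − x_j‖ < ‖x − x_i‖ for all i ≠ j. Then as σ → 0⁺, the Nadaraya–Watson estimator (∑_i exp(−‖x − x_i‖²/σ²) a_i) / (∑_i exp(−‖x − x_i‖²/σ²)) converges to a_j. -/
open Filter

/-- As `σ → 0⁺`, the Nadaraya–Watson estimator with Gaussian weights concentrates on the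
strictly unique nearest reference point `xi j` and converges to `a j`. -/
theorem nadaraya_watson_tendsto_nearest_zero
    {E : Type*} [NormedAddCommGroup E] [InnerProductSpace ℝ E]
    {ι : Type*} [Fintype ι]
    (x : E) (xi : ι → E) (a : ι → ℝ) (j : ι)
    (hj : ∀ i : ι, i ≠ j → ‖x - xi j‖ < ‖x - xi i‖) :
    Tendsto
      (fun σ : ℝ =>
        (∑ i, Real.exp (-‖x - xi i‖ ^ 2 / σ ^ 2) * a i) /
          (∑ i, Real.exp (-‖x - xi i‖ ^ 2 / σ ^ 2)))
      (nhdsWithin 0 (Set.Ioi 0)) (nhds (a j)) := by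
  classical
  set d : ι → ℝ := fun i => ‖x - xi i‖ with hd
  set F : ℝ → ι → ℝ := fun σ i => Real.exp ((d j ^ 2 - d i ^ 2) / σ ^ 2) with hF
  -- 1/σ² tends to atTop
  have hsq : Tendsto (fun σ : ℝ => (σ ^ 2)⁻¹) (nhdsWithin 0 (Set.Ioi 0)) atTop := by
    apply tendsto_inv_nhdsGT_zero.comp
    apply tendsto_nhdsWithin_of_tendsto_nhds_of_eventually_within
    · have : Tendsto (fun σ : ℝ => σ ^ 2) (nhds 0) (nhds 0) := by
        simpa using (continuous_pow 2).tendsto (0 : ℝ)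
      exact this.mono_left nhdsWithin_le_nhds
    · filter_upwards [self_mem_nhdsWithin] with σ (hσ : 0 < σ)
      exact pow_pos hσ 2
  -- each weight tends to 1 or 0
  have hterm : ∀ i : ι, Tendsto (fun σ => F σ i) (nhdsWithin 0 (Set.Ioi 0))
      (nhds (if i = j then 1 else 0)) := by
    intro i
    by_cases h : i = j
    · subst h
      simp [hF]
    · simp only [if_neg h]
      have hc : d j ^ 2 - d i ^ 2 < 0 := by
        have := hj i h
        nlinarith [norm_nonneg (x - xi j), norm_nonneg (x - xi i)]
      have hbot : Tendsto (fun σ : ℝ => (d j ^ 2 - d i ^ 2) / σ ^ 2)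
          (nhdsWithin 0 (Set.Ioi 0)) atBot := by
        simp only [div_eq_mul_inv]
        exact Tendsto.const_mul_atTop_of_neg hc hsq
      exact Real.tendsto_exp_atBot.comp hbot
  have hnum : Tendsto (fun σ => ∑ i, F σ i * a i) (nhdsWithin 0 (Set.Ioi 0))
      (nhds (a j)) := by
    have := tendsto_finset_sum (Finset.univ : Finset ι)
      (fun i _ => (hterm i).mul_const (a i))
    simpa [Finset.sum_ite_eq', ite_mul] using this
  have hden : Tendsto (fun σ => ∑ i, F σ i) (nhdsWithin 0 (Set.Ioi 0)) (nhds 1) := by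
    have := tendsto_finset_sum (Finset.univ : Finset ι) (fun i _ => hterm i)
    simpa [Finset.sum_ite_eq'] using this
  have hlim : Tendsto (fun σ => (∑ i, F σ i * a i) / (∑ i, F σ i))
      (nhdsWithin 0 (Set.Ioi 0)) (nhds (a j)) := by
    simpa [Pi.div_def] using hnum.div hden one_ne_zero
  refine hlim.congr' ?_
  filter_upwards [self_mem_nhdsWithin] with σ (hσ : 0 < σ)
  have he : Real.exp (d j ^ 2 / σ ^ 2) ≠ 0 := (Real.exp_pos _).ne'
  have hFeq : ∀ i, F σ i = Real.exp (d j ^ 2 / σ ^ 2) * Real.exp (-d i ^ 2 / σ ^ 2) := by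
    intro i
    rw [← Real.exp_add, hF]
    ring_nf
  simp only [hFeq, mul_assoc, ← Finset.mul_sum]
  rw [mul_div_mul_left _ _ he]
end

section
/- Let μ be a finite measure on a real inner product space E (with Borel σ-algebra), let x ∈ E with μ(B(x, ε)) > 0 for every ε > 0, and let f : E → ℝ be a bounded measurable function that is continuous at x. Then as σ → 0⁺, the kernel-weighted expectation (∫ exp(−‖z − x‖²/σ²) f(z) dμ(z)) / (∫ exp(−‖z − x‖²/σ²) dμ(z)) converges to f(x). -/
open MeasureTheory Filter

/-- Population small-bandwidth limit: for a finite measure `μ` charging every ball around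
`x`, and a bounded measurable `f` continuous at `x`, the Gaussian-kernel-weighted
expectation converges to `f x` as `σ → 0⁺`. -/
theorem kernel_weighted_expectation_tendsto_point
    {E : Type*} [NormedAddCommGroup E] [InnerProductSpace ℝ E]
    [MeasurableSpace E] [BorelSpace E]
    (μ : Measure E) [IsFiniteMeasure μ]
    (x : E) (hx : ∀ ε : ℝ, 0 < ε → 0 < μ (Metric.ball x ε))
    (f : E → ℝ) (hf_meas : Measurable f)
    (hf_bdd : ∃ C : ℝ, ∀ z, |f z| ≤ C)
    (hf_cont : ContinuousAt f x) :
    Tendsto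
      (fun σ : ℝ =>
        (∫ z, Real.exp (-‖z - x‖ ^ 2 / σ ^ 2) * f z ∂μ) /
          (∫ z, Real.exp (-‖z - x‖ ^ 2 / σ ^ 2) ∂μ))
      (nhdsWithin 0 (Set.Ioi 0)) (nhds (f x)) := by
  obtain ⟨C, hC⟩ := hf_bdd
  have hC0 : 0 ≤ C := (abs_nonneg _).trans (hC x)
  rw [Metric.tendsto_nhds]
  intro ε hε
  obtain ⟨δ, hδpos, hδ⟩ := Metric.continuousAt_iff.1 hf_cont (ε / 4) (by positivity)
  set m : ℝ := (μ (Metric.ball x (δ / 2))).toReal with hm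
  have hmpos : 0 < m := by
    rw [hm, ENNReal.toReal_pos_iff]
    exact ⟨hx (δ / 2) (by positivity), measure_lt_top _ _⟩
  set M : ℝ := (μ Set.univ).toReal with hM
  have hM0 : 0 ≤ M := ENNReal.toReal_nonneg
  -- The tail factor tends to 0
  have hexp : Tendsto (fun σ : ℝ => Real.exp (-(3 * δ ^ 2 / 4) / σ ^ 2))
      (nhdsWithin 0 (Set.Ioi 0)) (nhds 0) := by
    have h1 : Tendsto (fun σ : ℝ => σ ^ 2) (nhdsWithin 0 (Set.Ioi 0))
        (nhdsWithin 0 (Set.Ioi 0)) := by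
      apply tendsto_nhdsWithin_of_tendsto_nhds_of_eventually_within
      · have := ((continuous_pow 2).tendsto (0 : ℝ)).mono_left
          (nhdsWithin_le_nhds (s := Set.Ioi (0:ℝ)))
        simpa using this
      · filter_upwards [self_mem_nhdsWithin] with σ hσ
        exact Set.mem_Ioi.2 (pow_pos (Set.mem_Ioi.1 hσ) 2)
    have h3 : Tendsto (fun t : ℝ => (3 * δ ^ 2 / 4) / t) (nhdsWithin 0 (Set.Ioi 0)) atTop := by
      simpa [div_eq_mul_inv] using
        tendsto_inv_nhdsGT_zero.const_mul_atTop (by positivity : (0:ℝ) < 3 * δ ^ 2 / 4)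
    have h2 : Tendsto (fun t : ℝ => -(3 * δ ^ 2 / 4) / t) (nhdsWithin 0 (Set.Ioi 0)) atBot := by
      have := tendsto_neg_atTop_atBot.comp h3
      simpa [Function.comp_def, neg_div] using this
    exact Real.tendsto_exp_atBot.comp (h2.comp h1)
  have hev : ∀ᶠ σ in nhdsWithin 0 (Set.Ioi 0),
      (2 * C * M / m) * Real.exp (-(3 * δ ^ 2 / 4) / σ ^ 2) < ε / 2 := by
    have h := hexp.const_mul (2 * C * M / m)
    rw [mul_zero] at h
    exact h.eventually_lt_const (by positivity)
  filter_upwards [hev, self_mem_nhdsWithin] with σ hσb hσp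
  have hσ0 : (σ : ℝ) ≠ 0 := ne_of_gt hσp
  show dist ((∫ z, Real.exp (-‖z - x‖ ^ 2 / σ ^ 2) * f z ∂μ) /
      (∫ z, Real.exp (-‖z - x‖ ^ 2 / σ ^ 2) ∂μ)) (f x) < ε
  set K : E → ℝ := fun z => Real.exp (-‖z - x‖ ^ 2 / σ ^ 2) with hKdef
  have hKpos : ∀ z, 0 < K z := fun z => Real.exp_pos _
  have hKle1 : ∀ z, K z ≤ 1 := by
    intro z
    rw [hKdef]
    apply Real.exp_le_one_iff.2
    apply div_nonpos_of_nonpos_of_nonneg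
    · simp [neg_nonpos, sq_nonneg]
    · positivity
  have hKcont : Continuous K := by
    apply Real.continuous_exp.comp
    continuity
  have hKmeas : Measurable K := hKcont.measurable
  have hKint : Integrable K μ := by
    apply Integrable.mono' (integrable_const (1 : ℝ)) hKmeas.aestronglyMeasurable
    filter_upwards with z
    rw [Real.norm_eq_abs, abs_of_pos (hKpos z)]
    exact hKle1 z
  have hKfint : Integrable (fun z => K z * f z) μ := by
    apply Integrable.mono' (integrable_const C) (hKmeas.mul hf_meas).aestronglyMeasurable
    filter_upwards with z
    rw [Real.norm_eq_abs, Pi.mul_apply, abs_mul, abs_of_pos (hKpos z)]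
    calc K z * |f z| ≤ 1 * C := mul_le_mul (hKle1 z) (hC z) (abs_nonneg _) one_pos.le
      _ = C := one_mul C
  set D : ℝ := ∫ z, K z ∂μ with hD
  have hDpos : 0 < D := by
    rw [hD, integral_pos_iff_support_of_nonneg (fun z => (hKpos z).le) hKint]
    have hsupp : Function.support K = Set.univ := Set.eq_univ_of_forall fun z => (hKpos z).ne'
    rw [hsupp]
    exact (hx 1 one_pos).trans_le (measure_mono (Set.subset_univ _))
  set e' : ℝ := Real.exp (-(δ / 2) ^ 2 / σ ^ 2) with he'
  have he'pos : 0 < e' := Real.exp_pos _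
  -- lower bound for the denominator
  have hDlow : e' * m ≤ D := by
    have hind : ∀ z, (Metric.ball x (δ / 2)).indicator (fun _ => e') z ≤ K z := by
      intro z
      by_cases hz : z ∈ Metric.ball x (δ / 2)
      · rw [Set.indicator_of_mem hz]
        have h1 : ‖z - x‖ ≤ δ / 2 := by
          rw [← dist_eq_norm]; exact (Metric.mem_ball.1 hz).le
        have h2 : ‖z - x‖ ^ 2 ≤ (δ / 2) ^ 2 := by
          apply pow_le_pow_left₀ (norm_nonneg _) h1
        rw [he', hKdef]
        apply Real.exp_le_exp.2
        apply div_le_div_of_nonneg_right _ (by positivity)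
        · linarith
      · rw [Set.indicator_of_notMem hz]
        exact (hKpos z).le
    calc e' * m = ∫ z, (Metric.ball x (δ / 2)).indicator (fun _ => e') z ∂μ := by
          rw [integral_indicator_const _ measurableSet_ball, smul_eq_mul, measureReal_def, ← hm, mul_comm]
      _ ≤ D := integral_mono
          ((integrable_const e').indicator measurableSet_ball) hKint hind
  set T : ℝ := Real.exp (-δ ^ 2 / σ ^ 2) with hT
  have hTpos : 0 < T := Real.exp_pos _
  -- numerator bound
  have hnum : |(∫ z, K z * f z ∂μ) - f x * D| ≤ ε / 4 * D + 2 * C * T * M := by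
    have heq : (∫ z, K z * f z ∂μ) - f x * D = ∫ z, K z * (f z - f x) ∂μ := by
      rw [hD, ← integral_const_mul (f x) K, ← integral_sub hKfint (hKint.const_mul (f x))]
      congr 1; funext z; ring
    rw [heq]
    have habs : Integrable (fun z => |K z * (f z - f x)|) μ :=
      ((hKfint.sub (hKint.const_mul (f x))).congr
        (Eventually.of_forall fun z => by simp only [Pi.sub_apply]; ring)).abs
    calc |∫ z, K z * (f z - f x) ∂μ| ≤ ∫ z, |K z * (f z - f x)| ∂μ := by
          exact norm_integral_le_integral_norm (fun z => K z * (f z - f x))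
      _ ≤ ∫ z, (ε / 4 * K z + 2 * C * T) ∂μ := by
          apply integral_mono habs (((hKint.const_mul (ε/4))).add (integrable_const _))
          · intro z
            simp only [Pi.add_apply]
            rw [abs_mul, abs_of_pos (hKpos z)]
            by_cases hz : z ∈ Metric.ball x δ
            · have h1 : |f z - f x| ≤ ε / 4 := by
                have := hδ (Metric.mem_ball.1 hz)
                rw [Real.dist_eq] at this
                exact this.le
              have h2 : K z * |f z - f x| ≤ K z * (ε / 4) :=
                mul_le_mul_of_nonneg_left h1 (hKpos z).le
              nlinarith [hKpos z, hTpos]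
            · have h1 : K z ≤ T := by
                rw [hKdef, hT]
                apply Real.exp_le_exp.2
                apply div_le_div_of_nonneg_right _ (by positivity)
                have hd : δ ≤ ‖z - x‖ := by
                  rw [← dist_eq_norm]
                  simpa using Metric.mem_ball.not.1 hz
                nlinarith
              have h2 : |f z - f x| ≤ 2 * C := by
                calc |f z - f x| ≤ |f z| + |f x| := abs_sub _ _
                  _ ≤ C + C := add_le_add (hC z) (hC x)
                  _ = 2 * C := by ring
              nlinarith [hKpos z, (hKpos z).le, abs_nonneg (f z - f x), hTpos]
      _ = ε / 4 * D + 2 * C * T * M := by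
          rw [integral_add (hKint.const_mul (ε/4)) (integrable_const _),
            integral_const_mul, integral_const, smul_eq_mul, measureReal_def, ← hD, ← hM]
          ring
  -- final estimate
  have hdist : dist ((∫ z, K z * f z ∂μ) / D) (f x)
      = |(∫ z, K z * f z ∂μ) - f x * D| / D := by
    rw [Real.dist_eq, div_sub' (ne_of_gt hDpos), abs_div, abs_of_pos hDpos,
      mul_comm D (f x)]
  have hstep1 : |(∫ z, K z * f z ∂μ) - f x * D| / D ≤ ε / 4 + 2 * C * T * M / D := by
    rw [div_le_iff₀ hDpos]
    calc |(∫ z, K z * f z ∂μ) - f x * D| ≤ ε / 4 * D + 2 * C * T * M := hnum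
      _ = (ε / 4 + 2 * C * T * M / D) * D := by field_simp
  have hstep2 : 2 * C * T * M / D ≤ 2 * C * T * M / (e' * m) := by
    apply div_le_div_of_nonneg_left _ (by positivity) hDlow
    positivity
  have hstep3 : 2 * C * T * M / (e' * m) =
      (2 * C * M / m) * Real.exp (-(3 * δ ^ 2 / 4) / σ ^ 2) := by
    have hTe : T / e' = Real.exp (-(3 * δ ^ 2 / 4) / σ ^ 2) := by
      rw [hT, he', ← Real.exp_sub]
      congr 1
      field_simp
      ring
    rw [← hTe]
    ring
  clear_value m M e' T
  have : dist ((∫ z, K z * f z ∂μ) / D) (f x) < ε := by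
    rw [hdist]
    calc |(∫ z, K z * f z ∂μ) - f x * D| / D ≤ ε / 4 + 2 * C * T * M / D := hstep1
      _ ≤ ε / 4 + 2 * C * T * M / (e' * m) := (add_le_add_iff_left _).2 hstep2
      _ = ε / 4 + (2 * C * M / m) * Real.exp (-(3 * δ ^ 2 / 4) / σ ^ 2) := by rw [hstep3]
      _ < ε / 4 + ε / 2 := (add_lt_add_iff_left _).2 hσb
      _ < ε := by linarith only [hε]
  exact this
end
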